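/- The preconditioned KKT matrix E satisfies ‖E‖ ≤ 2 in the spectral norm; equivalently, |⟨z, Ew⟩| ≤ 2‖z‖‖w‖ for all z, w ∈ ℝ^{n_q+2n_u}. -/

import Mathlib

set_option maxHeartbeats 1000000
set_option synthInstance.maxHeartbeats 400000


open Matrix

/-- The vector in Euclidean space obtained by applying the matrix `M` to `x`
(matrix-vector multiplication, viewed as a map between Euclidean spaces). -/
noncomputable def mulVecE {ι κ : Type} [Fintype ι] [Fintype κ] [DecidableEq κ]
    (M : Matrix ι κ ℝ) (x : EuclideanSpace ℝ κ) : EuclideanSpace ℝ ι :=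
  Matrix.toEuclideanLin M x

/-- The spectral norm (Euclidean operator norm) of a matrix. -/
noncomputable def specNorm {ι κ : Type} [Fintype ι] [Fintype κ] [DecidableEq κ]
    (M : Matrix ι κ ℝ) : ℝ :=
  ‖LinearMap.toContinuousLinearMap (Matrix.toEuclideanLin M)‖

/-- The square root of a positive semidefinite matrix, as defined in the older Mathlib
(`Matrix.PosSemidef.sqrt`, since removed). -/
noncomputable def Matrix.PosSemidef.sqrt {n : Type} [Fintype n] [DecidableEq n]
    {A : Matrix n n ℝ} (hA : A.PosSemidef) : Matrix n n ℝ :=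
  hA.1.eigenvectorUnitary * diagonal (Real.sqrt ∘ hA.1.eigenvalues) *
    (star hA.1.eigenvectorUnitary : Matrix n n ℝ)

lemma Matrix.PosSemidef.sqrt_mul_self {n : Type} [Fintype n] [DecidableEq n]
    {A : Matrix n n ℝ} (hA : A.PosSemidef) : hA.sqrt * hA.sqrt = A := by
  have hU : (star hA.1.eigenvectorUnitary : Matrix n n ℝ) * hA.1.eigenvectorUnitary = 1 :=
    Unitary.coe_star_mul_self _
  have hd : diagonal (Real.sqrt ∘ hA.1.eigenvalues) * diagonal (Real.sqrt ∘ hA.1.eigenvalues)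
      = diagonal (RCLike.ofReal ∘ hA.1.eigenvalues) := by
    rw [diagonal_mul_diagonal]; congr 1; funext i
    simp [Real.mul_self_sqrt (hA.eigenvalues_nonneg i)]
  conv_rhs => rw [hA.1.spectral_theorem, Unitary.conjStarAlgAut_apply, ← hd]
  unfold Matrix.PosSemidef.sqrt
  set U : Matrix n n ℝ := (hA.1.eigenvectorUnitary : Matrix n n ℝ)
  set V : Matrix n n ℝ := (star hA.1.eigenvectorUnitary : Matrix n n ℝ)
  set D := diagonal (Real.sqrt ∘ hA.1.eigenvalues)
  calc U * D * V * (U * D * V) = U * D * (V * U) * D * V := by simp only [Matrix.mul_assoc]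
  _ = U * (D * D) * V := by rw [hU, Matrix.mul_one]; simp only [Matrix.mul_assoc]

lemma Matrix.PosSemidef.posSemidef_sqrt {n : Type} [Fintype n] [DecidableEq n]
    {A : Matrix n n ℝ} (hA : A.PosSemidef) : hA.sqrt.PosSemidef := by
  unfold Matrix.PosSemidef.sqrt
  rw [Matrix.star_eq_conjTranspose]
  exact (posSemidef_diagonal_iff.2 fun i => Real.sqrt_nonneg _).mul_mul_conjTranspose_same _

namespace KKTAux

/-- Interpret a plain vector as an element of Euclidean space. -/
noncomputable def te {ι : Type} [Fintype ι] (v : ι → ℝ) : EuclideanSpace ℝ ι :=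
  (WithLp.equiv 2 (ι → ℝ)).symm v

variable {ι κ : Type} [Fintype ι] [Fintype κ]

lemma te_add (v w : ι → ℝ) : te (v + w) = te v + te w := rfl

lemma te_normsq (v : ι → ℝ) : ‖te v‖ ^ 2 = v ⬝ᵥ v := by
  rw [EuclideanSpace.norm_eq, Real.sq_sqrt (by positivity)]
  simp [te, dotProduct, Real.norm_eq_abs, sq_abs, pow_two]

lemma te_inner (v w : ι → ℝ) : (inner ℝ (te v) (te w) : ℝ) = v ⬝ᵥ w := by
  simp [te, PiLp.inner_apply, dotProduct, RCLike.inner_apply]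
  exact Finset.sum_congr rfl fun i _ => mul_comm _ _

lemma te_split (v : ι ⊕ κ → ℝ) :
    ‖te v‖ ^ 2 = ‖te (v ∘ Sum.inl)‖ ^ 2 + ‖te (v ∘ Sum.inr)‖ ^ 2 := by
  simp only [te_normsq, dotProduct]
  exact Fintype.sum_sum_type _

lemma te_elim_sq (p : ι → ℝ) (q : κ → ℝ) :
    ‖te (Sum.elim p q)‖ ^ 2 = ‖te p‖ ^ 2 + ‖te q‖ ^ 2 := by
  rw [te_split]; simp

lemma sq_le_imp {a b : ℝ} (ha : 0 ≤ a) (hb : 0 ≤ b) (h : a ^ 2 ≤ b ^ 2) : a ≤ b := by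
  nlinarith

/-- A matrix with `1 - Mᵀ M ⪰ 0` is a contraction. -/
lemma contraction [DecidableEq κ] {M : Matrix ι κ ℝ}
    (h : (1 - Mᵀ * M).PosSemidef) (v : κ → ℝ) :
    ‖te (M *ᵥ v)‖ ≤ ‖te v‖ := by
  have h2 := h.dotProduct_mulVec_nonneg v
  have hsv : star v = v := by funext i; exact star_trivial _
  rw [hsv, sub_mulVec, one_mulVec, dotProduct_sub] at h2
  have key : v ⬝ᵥ (Mᵀ * M) *ᵥ v = (M *ᵥ v) ⬝ᵥ (M *ᵥ v) := by
    rw [← mulVec_mulVec, dotProduct_mulVec, vecMul_transpose]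
  refine sq_le_imp (norm_nonneg _) (norm_nonneg _) ?_
  rw [te_normsq, te_normsq, ← key]
  linarith

/-- The transpose of a pointwise contraction is a contraction. -/
lemma contraction_t {M : Matrix ι κ ℝ}
    (h : ∀ x, ‖te (M *ᵥ x)‖ ≤ ‖te x‖) (w : ι → ℝ) :
    ‖te (Mᵀ *ᵥ w)‖ ≤ ‖te w‖ := by
  set a := Mᵀ *ᵥ w with ha
  have key : a ⬝ᵥ a = w ⬝ᵥ (M *ᵥ a) := by
    rw [dotProduct_mulVec w M a, ← mulVec_transpose M w, ← ha]
  have cs : w ⬝ᵥ (M *ᵥ a) ≤ ‖te w‖ * ‖te (M *ᵥ a)‖ := by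
    rw [← te_inner]; exact real_inner_le_norm _ _
  have h3 : ‖te a‖ ^ 2 ≤ ‖te w‖ * ‖te a‖ := by
    rw [te_normsq]
    calc a ⬝ᵥ a = w ⬝ᵥ (M *ᵥ a) := key
    _ ≤ ‖te w‖ * ‖te (M *ᵥ a)‖ := cs
    _ ≤ ‖te w‖ * ‖te a‖ := mul_le_mul_of_nonneg_left (h a) (norm_nonneg _)
  nlinarith [norm_nonneg (te a), norm_nonneg (te w)]

lemma opNorm_le_of [DecidableEq κ] {c : ℝ} (hc : 0 ≤ c) (M : Matrix ι κ ℝ)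
    (h : ∀ v : κ → ℝ, ‖te (M *ᵥ v)‖ ≤ c * ‖te v‖) : specNorm M ≤ c := by
  refine ContinuousLinearMap.opNorm_le_bound _ hc fun x => ?_
  simpa [te, Matrix.toEuclideanLin_apply] using h ((WithLp.equiv 2 (κ → ℝ)) x)

lemma smul_psd {M : Matrix ι ι ℝ} (h : M.PosSemidef) {c : ℝ} (hc : 0 ≤ c) :
    (c • M).PosSemidef := by
  refine Matrix.PosSemidef.of_dotProduct_mulVec_nonneg ?_ ?_
  · have := h.1
    unfold Matrix.IsHermitian at this ⊢
    rw [conjTranspose_smul, this]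
    simp
  · intro x
    rw [smul_mulVec, dotProduct_smul, smul_eq_mul]
    exact mul_nonneg hc (h.dotProduct_mulVec_nonneg x)

lemma psd_contr_one_sub [DecidableEq ι] {P : Matrix ι ι ℝ}
    (hP : P.PosSemidef) (hP1 : (1 - P).PosSemidef) :
    (1 - (1 - P)ᵀ * (1 - P)).PosSemidef := by
  have hPt : Pᵀ = P := by
    rw [← conjTranspose_eq_transpose_of_trivial]; exact hP.1
  have hs := hP.posSemidef_sqrt
  set s := hP.sqrt with hs_def
  have hss : s * s = P := hP.sqrt_mul_self
  have hsH : sᴴ = s := hs.1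
  have key : 1 - (1 - P)ᵀ * (1 - P) = P + s * (1 - P) * sᴴ := by
    rw [hsH, transpose_sub, transpose_one, hPt, ← hss]
    noncomm_ring
  rw [key]
  exact hP.add (hP1.mul_mul_conjTranspose_same s)

/-- The key computation: `1 - FᵀF` is PSD for `F = T' S^{-1/2}`, `S = P + T'ᵀT'`, `P ⪰ 0`. -/
lemma main_aux {a b : Type} [Fintype a] [DecidableEq a] [Fintype b]
    (P : Matrix a a ℝ) (hP : P.PosSemidef) (T' : Matrix b a ℝ)
    (hS : (P + T'ᵀ * T').PosDef) :
    (1 - (T' * hS.posSemidef.sqrt⁻¹)ᵀ * (T' * hS.posSemidef.sqrt⁻¹)).PosSemidef := by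
  set s := hS.posSemidef.sqrt with hs_def
  have hspsd := hS.posSemidef.posSemidef_sqrt
  have hss : s * s = P + T'ᵀ * T' := hS.posSemidef.sqrt_mul_self
  have hsymm : sᵀ = s := by
    rw [← conjTranspose_eq_transpose_of_trivial]; exact hspsd.1
  have hu : IsUnit s.det := by
    have hdet : s.det * s.det = (P + T'ᵀ * T').det := by rw [← det_mul, hss]
    have hpos : 0 < (P + T'ᵀ * T').det := hS.det_pos
    refine isUnit_iff_ne_zero.2 fun h0 => ?_
    rw [h0, mul_zero] at hdet
    exact absurd hdet.symm (ne_of_gt hpos)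
  have hinv : s⁻¹ * s = 1 := nonsing_inv_mul s hu
  have hinv' : s * s⁻¹ = 1 := mul_nonsing_inv s hu
  have hs1t : (s⁻¹)ᵀ = s⁻¹ := by rw [transpose_nonsing_inv, hsymm]
  have hFtF : (T' * s⁻¹)ᵀ * (T' * s⁻¹) = s⁻¹ * (T'ᵀ * T') * s⁻¹ := by
    rw [transpose_mul, hs1t]
    simp only [Matrix.mul_assoc]
  have hone : s⁻¹ * (s * s) * s⁻¹ = 1 := by
    calc s⁻¹ * (s * s) * s⁻¹ = (s⁻¹ * s) * (s * s⁻¹) := by noncomm_ring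
    _ = 1 := by rw [hinv, hinv', one_mul]
  have hX1eq : 1 - (T' * s⁻¹)ᵀ * (T' * s⁻¹) = s⁻¹ * P * s⁻¹ := by
    have hsub : s * s - T'ᵀ * T' = P := by rw [hss]; exact add_sub_cancel_right _ _
    calc 1 - (T' * s⁻¹)ᵀ * (T' * s⁻¹)
        = s⁻¹ * (s * s) * s⁻¹ - s⁻¹ * (T'ᵀ * T') * s⁻¹ := by rw [hFtF, hone]
    _ = s⁻¹ * (s * s - T'ᵀ * T') * s⁻¹ := by noncomm_ring
    _ = s⁻¹ * P * s⁻¹ := by rw [hsub]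
  rw [hX1eq]
  have := hP.mul_mul_conjTranspose_same s⁻¹
  rwa [conjTranspose_eq_transpose_of_trivial, hs1t] at this

end KKTAux

open KKTAux

/-- Continuity of the preconditioned KKT matrix: `‖E‖ ≤ 2` in the spectral
norm; equivalently `|⟨z, Ew⟩| ≤ 2‖z‖‖w‖` for all `z, w`. -/
theorem stmt8
    (nq nu nobs : ℕ) (α ρ : ℝ) (hα : 0 < α) (hρ : 0 < ρ)
    (R : Matrix (Fin nq) (Fin nq) ℝ) (T : Matrix (Fin nu) (Fin nq) ℝ)
    (A : Matrix (Fin nu) (Fin nu) ℝ) (B : Matrix (Fin nobs) (Fin nu) ℝ)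
    (hR : IsUnit R.det) (hA : IsUnit A.det)
    (hSR : ((α / ρ) • (Rᵀ * R) + Tᵀ * T).PosDef)
    (hSA : ((1 / ρ) • (Bᵀ * B) + Aᵀ * A).PosDef)
    (F : Matrix (Fin nu) (Fin nq) ℝ) (hF : F = T * hSR.posSemidef.sqrt⁻¹)
    (G : Matrix (Fin nu) (Fin nu) ℝ) (hG : G = A * hSA.posSemidef.sqrt⁻¹)
    (X : Matrix (Fin nq ⊕ Fin nu) (Fin nq ⊕ Fin nu) ℝ)
    (hX : X = fromBlocks (1 - Fᵀ * F) 0 0 (1 - Gᵀ * G))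
    (Y : Matrix (Fin nu) (Fin nq ⊕ Fin nu) ℝ)
    (hY : Y = fromCols F G)
    (E : Matrix ((Fin nq ⊕ Fin nu) ⊕ Fin nu) ((Fin nq ⊕ Fin nu) ⊕ Fin nu) ℝ)
    (hE : E = fromBlocks X Yᵀ Y 0) :
    specNorm E ≤ 2 ∧
    ∀ z w : EuclideanSpace ℝ ((Fin nq ⊕ Fin nu) ⊕ Fin nu),
      |(inner ℝ z (mulVecE E w) : ℝ)| ≤ 2 * ‖z‖ * ‖w‖ := by
  -- positive semidefiniteness of the Gram pieces
  have hRR : (Rᵀ * R).PosSemidef := by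
    have := posSemidef_conjTranspose_mul_self R
    rwa [conjTranspose_eq_transpose_of_trivial] at this
  have hBB : (Bᵀ * B).PosSemidef := by
    have := posSemidef_conjTranspose_mul_self B
    rwa [conjTranspose_eq_transpose_of_trivial] at this
  have hX1 : (1 - Fᵀ * F).PosSemidef := by
    rw [hF]
    exact main_aux _ (smul_psd hRR (by positivity)) T hSR
  have hX2 : (1 - Gᵀ * G).PosSemidef := by
    rw [hG]
    exact main_aux _ (smul_psd hBB (by positivity)) A hSA
  have hFtF : (Fᵀ * F).PosSemidef := by
    have := posSemidef_conjTranspose_mul_self F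
    rwa [conjTranspose_eq_transpose_of_trivial] at this
  have hGtG : (Gᵀ * G).PosSemidef := by
    have := posSemidef_conjTranspose_mul_self G
    rwa [conjTranspose_eq_transpose_of_trivial] at this
  -- pointwise contractions
  have hFc : ∀ v, ‖te (F *ᵥ v)‖ ≤ ‖te v‖ := contraction hX1
  have hGc : ∀ v, ‖te (G *ᵥ v)‖ ≤ ‖te v‖ := contraction hX2
  have hFt : ∀ v, ‖te (Fᵀ *ᵥ v)‖ ≤ ‖te v‖ := contraction_t hFc
  have hGt : ∀ v, ‖te (Gᵀ *ᵥ v)‖ ≤ ‖te v‖ := contraction_t hGc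
  have hX1c : ∀ v, ‖te ((1 - Fᵀ * F) *ᵥ v)‖ ≤ ‖te v‖ :=
    contraction (psd_contr_one_sub hFtF hX1)
  have hX2c : ∀ v, ‖te ((1 - Gᵀ * G) *ᵥ v)‖ ≤ ‖te v‖ :=
    contraction (psd_contr_one_sub hGtG hX2)
  -- the main pointwise bound for E
  have hEb : ∀ v : ((Fin nq ⊕ Fin nu) ⊕ Fin nu) → ℝ,
      ‖te (E *ᵥ v)‖ ≤ 2 * ‖te v‖ := by
    intro v
    set v₁ : (Fin nq ⊕ Fin nu) → ℝ := v ∘ Sum.inl with hv₁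
    set v₂ : Fin nu → ℝ := v ∘ Sum.inr with hv₂
    set p : Fin nq → ℝ := v₁ ∘ Sum.inl with hp
    set q : Fin nu → ℝ := v₁ ∘ Sum.inr with hq
    have hv1elim : v₁ = Sum.elim p q := by funext x; cases x <;> rfl
    have hEv : E *ᵥ v = Sum.elim (X *ᵥ v₁ + Yᵀ *ᵥ v₂) (Y *ᵥ v₁) := by
      rw [hE, fromBlocks_mulVec]
      simp [← hv₁, ← hv₂]
    have hXv : X *ᵥ v₁ = Sum.elim ((1 - Fᵀ * F) *ᵥ p) ((1 - Gᵀ * G) *ᵥ q) := by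
      rw [hX, fromBlocks_mulVec]
      simp [← hp, ← hq]
    have hXb : ‖te (X *ᵥ v₁)‖ ^ 2 ≤ ‖te v₁‖ ^ 2 := by
      rw [hXv, te_elim_sq, hv1elim, te_elim_sq]
      have h1 := hX1c p
      have h2 := hX2c q
      nlinarith [norm_nonneg (te ((1 - Fᵀ * F) *ᵥ p)), norm_nonneg (te p),
        norm_nonneg (te ((1 - Gᵀ * G) *ᵥ q)), norm_nonneg (te q)]
    have hYtv : Yᵀ *ᵥ v₂ = Sum.elim (Fᵀ *ᵥ v₂) (Gᵀ *ᵥ v₂) := by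
      rw [hY, transpose_fromCols, fromRows_mulVec]
    have hYtb : ‖te (Yᵀ *ᵥ v₂)‖ ^ 2 ≤ 2 * ‖te v₂‖ ^ 2 := by
      rw [hYtv, te_elim_sq]
      have h1 := hFt v₂
      have h2 := hGt v₂
      nlinarith [norm_nonneg (te (Fᵀ *ᵥ v₂)), norm_nonneg (te (Gᵀ *ᵥ v₂)),
        norm_nonneg (te v₂)]
    have hYv : Y *ᵥ v₁ = F *ᵥ p + G *ᵥ q := by
      rw [hY, hv1elim, fromCols_mulVec_sumElim]
    have hYb : ‖te (Y *ᵥ v₁)‖ ^ 2 ≤ 2 * ‖te v₁‖ ^ 2 := by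
      have htri : ‖te (Y *ᵥ v₁)‖ ≤ ‖te (F *ᵥ p)‖ + ‖te (G *ᵥ q)‖ := by
        rw [hYv, te_add]; exact norm_add_le _ _
      have h1 := hFc p
      have h2 := hGc q
      have hsplit : ‖te v₁‖ ^ 2 = ‖te p‖ ^ 2 + ‖te q‖ ^ 2 := by
        rw [hv1elim, te_elim_sq]
      nlinarith [norm_nonneg (te (Y *ᵥ v₁)), norm_nonneg (te (F *ᵥ p)),
        norm_nonneg (te (G *ᵥ q)), norm_nonneg (te p), norm_nonneg (te q),
        sq_nonneg (‖te p‖ - ‖te q‖)]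
    -- assemble
    have h0 : ‖te (E *ᵥ v)‖ ^ 2
        = ‖te (X *ᵥ v₁ + Yᵀ *ᵥ v₂)‖ ^ 2 + ‖te (Y *ᵥ v₁)‖ ^ 2 := by
      rw [hEv, te_elim_sq]
    have hA1 : ‖te (X *ᵥ v₁ + Yᵀ *ᵥ v₂)‖ ≤ ‖te (X *ᵥ v₁)‖ + ‖te (Yᵀ *ᵥ v₂)‖ := by
      rw [te_add]; exact norm_add_le _ _
    have hA1sq : ‖te (X *ᵥ v₁ + Yᵀ *ᵥ v₂)‖ ^ 2
        ≤ (‖te (X *ᵥ v₁)‖ + ‖te (Yᵀ *ᵥ v₂)‖) ^ 2 :=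
      pow_le_pow_left₀ (norm_nonneg _) hA1 2
    have hvsp : ‖te v‖ ^ 2 = ‖te v₁‖ ^ 2 + ‖te v₂‖ ^ 2 := te_split v
    refine sq_le_imp (norm_nonneg _) (by positivity) ?_
    have hx : (2 * ‖te v‖) ^ 2 = 4 * (‖te v₁‖ ^ 2 + ‖te v₂‖ ^ 2) := by
      rw [mul_pow, hvsp]; ring
    rw [hx]
    nlinarith [sq_nonneg (‖te (X *ᵥ v₁)‖ - ‖te (Yᵀ *ᵥ v₂)‖), h0, hA1sq, hXb, hYtb, hYb]
  constructor
  · exact opNorm_le_of (by norm_num) E hEb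
  · intro z w
    have h1 : |(inner ℝ z (mulVecE E w) : ℝ)| ≤ ‖z‖ * ‖mulVecE E w‖ :=
      abs_real_inner_le_norm _ _
    have h2 : ‖mulVecE E w‖ ≤ specNorm E * ‖w‖ := by
      simpa [mulVecE, specNorm] using
        (LinearMap.toContinuousLinearMap (Matrix.toEuclideanLin E)).le_opNorm w
    have h3 : specNorm E * ‖w‖ ≤ 2 * ‖w‖ :=
      mul_le_mul_of_nonneg_right (opNorm_le_of (by norm_num) E hEb) (norm_nonneg _)
    calc |(inner ℝ z (mulVecE E w) : ℝ)| ≤ ‖z‖ * ‖mulVecE E w‖ := h1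
    _ ≤ ‖z‖ * (2 * ‖w‖) := by
        refine mul_le_mul_of_nonneg_left (h2.trans h3) (norm_nonneg _)
    _ = 2 * ‖z‖ * ‖w‖ := by ring
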